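/- For ψ a bounded t-function on Spec ℤ corresponding to (n, U) and W ⊆ ℙ specialization-closed: if W ∩ U = ∅ then μ⁻_W(ψ) is again a t-function, corresponding to (n, U ∪ W); and if W ∩ U ≠ ∅ then μ⁻_W(ψ) is not a t-function. -/
import Mathlib


open scoped Classical

/-- The (right) mutation of a function ψ : Spec R → ℤ at a subset W ⊆ Spec R. -/
noncomputable def mutate {R : Type*} [CommRing R] (W : Set (PrimeSpectrum R))
    (ψ : PrimeSpectrum R → ℤ) : PrimeSpectrum R → ℤ :=
  fun p => if p ∈ W then ψ p + 1 else ψ p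

/-- ψ is a t-function: for every minimal (covering) inclusion of primes 𝔭 ⊊ 𝔮 one has
ψ(𝔭) ≤ ψ(𝔮) ≤ ψ(𝔭) + 1. -/
def IsTFun {R : Type*} [CommRing R] (ψ : PrimeSpectrum R → ℤ) : Prop :=
  ∀ p q : PrimeSpectrum R, p ⋖ q → ψ p ≤ ψ q ∧ ψ q ≤ ψ p + 1

/-- The zero ideal (0) as a point of Spec ℤ. -/
noncomputable def zeroPrime : PrimeSpectrum ℤ := ⟨⊥, Ideal.bot_prime⟩

/-- The ideal (p) generated by a prime number p, as a point of Spec ℤ. -/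
noncomputable def pPrime (p : Nat.Primes) : PrimeSpectrum ℤ :=
  ⟨Ideal.span {((p : ℕ) : ℤ)}, by
    rw [Ideal.span_singleton_prime (by exact_mod_cast p.2.ne_zero)]
    exact Nat.prime_iff_prime_int.mp p.2⟩

lemma pPrime_ne_zeroPrime (p : Nat.Primes) : pPrime p ≠ zeroPrime := by
  intro h
  have : Ideal.span {((p : ℕ) : ℤ)} = (⊥ : Ideal ℤ) := congrArg PrimeSpectrum.asIdeal h
  rw [Ideal.span_singleton_eq_bot] at this
  exact_mod_cast p.2.ne_zero (by exact_mod_cast this)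

lemma pPrime_le_pPrime {p q : Nat.Primes} (h : pPrime p ≤ pPrime q) : p = q := by
  have h' : Ideal.span {((p : ℕ) : ℤ)} ≤ Ideal.span {((q : ℕ) : ℤ)} := h
  rw [Ideal.span_singleton_le_span_singleton] at h'
  have : (q : ℕ) ∣ (p : ℕ) := by exact_mod_cast h'
  exact Subtype.ext ((Nat.prime_dvd_prime_iff_eq q.2 p.2).mp this).symm

lemma pPrime_injective : Function.Injective pPrime := fun p q h =>
  pPrime_le_pPrime (le_of_eq h)

lemma classifySpecInt (x : PrimeSpectrum ℤ) :
    x = zeroPrime ∨ ∃ p : Nat.Primes, x = pPrime p := by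
  obtain ⟨a, ha⟩ := (IsPrincipalIdealRing.principal x.asIdeal).1
  rw [Ideal.submodule_span_eq] at ha
  rcases eq_or_ne a 0 with rfl | h0
  · left; apply PrimeSpectrum.ext; simp [ha, zeroPrime]
  · right
    have hpr : Prime a := by
      rw [← Ideal.span_singleton_prime h0, ← ha]; exact x.2
    have hnat : Nat.Prime a.natAbs := Int.prime_iff_natAbs_prime.mp hpr
    refine ⟨⟨a.natAbs, hnat⟩, ?_⟩
    apply PrimeSpectrum.ext
    rw [ha]
    exact Ideal.span_singleton_eq_span_singleton.mpr (Int.associated_natAbs a)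

lemma zero_lt_pPrime (p : Nat.Primes) : zeroPrime < pPrime p :=
  lt_of_le_of_ne bot_le (Ne.symm (pPrime_ne_zeroPrime p))

lemma zero_covby (p : Nat.Primes) : zeroPrime ⋖ pPrime p := by
  refine ⟨zero_lt_pPrime p, fun r hr hr' => ?_⟩
  rcases classifySpecInt r with rfl | ⟨q, rfl⟩
  · exact lt_irrefl _ hr
  · exact hr'.ne (congrArg pPrime (pPrime_le_pPrime hr'.le))

lemma cover_classify {p q : PrimeSpectrum ℤ} (h : p ⋖ q) :
    p = zeroPrime ∧ ∃ l : Nat.Primes, q = pPrime l := by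
  rcases classifySpecInt q with rfl | ⟨l, rfl⟩
  · rcases classifySpecInt p with rfl | ⟨m, rfl⟩
    · exact absurd h.lt (lt_irrefl _)
    · exact absurd (le_of_lt h.lt) (fun hle =>
        pPrime_ne_zeroPrime m (le_antisymm hle bot_le))
  · rcases classifySpecInt p with rfl | ⟨m, rfl⟩
    · exact ⟨rfl, l, rfl⟩
    · exact absurd (congrArg pPrime (pPrime_le_pPrime h.lt.le)) h.lt.ne

/-- for the bounded t-function ψ on Spec ℤ corresponding to (n, U) and a
specialization-closed W ⊆ ℙ: if W ∩ U = ∅ then μ⁻_W(ψ) is again a t-function,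
corresponding to (n, U ∪ W), while if W ∩ U ≠ ∅ then μ⁻_W(ψ) is not a t-function. -/
theorem mutation_tfun_iff_disjoint (n : ℤ) (U Wp : Set Nat.Primes)
    (ψ : PrimeSpectrum ℤ → ℤ) (hψ0 : ψ zeroPrime = n)
    (hψp : ∀ p : Nat.Primes, ψ (pPrime p) = if p ∈ U then n + 1 else n) :
    (Wp ∩ U = ∅ →
      IsTFun (mutate (pPrime '' Wp) ψ) ∧
      mutate (pPrime '' Wp) ψ zeroPrime = n ∧
      ∀ p : Nat.Primes, mutate (pPrime '' Wp) ψ (pPrime p) =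
        if p ∈ U ∪ Wp then n + 1 else n) ∧
    (Wp ∩ U ≠ ∅ → ¬ IsTFun (mutate (pPrime '' Wp) ψ)) := by
  have hz : zeroPrime ∉ pPrime '' Wp := by
    rintro ⟨p, -, hp⟩; exact pPrime_ne_zeroPrime p hp
  have hmem : ∀ p : Nat.Primes, (pPrime p ∈ pPrime '' Wp ↔ p ∈ Wp) := fun p =>
    ⟨fun ⟨q, hq, hqe⟩ => pPrime_injective hqe ▸ hq, fun h => ⟨p, h, rfl⟩⟩
  have hmz : mutate (pPrime '' Wp) ψ zeroPrime = n := by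
    simp [mutate, hz, hψ0]
  constructor
  · intro hdisj
    have hdis : ∀ p, p ∈ Wp → p ∉ U := fun p hw hu =>
      Set.eq_empty_iff_forall_notMem.mp hdisj p ⟨hw, hu⟩
    have hmp : ∀ p : Nat.Primes, mutate (pPrime '' Wp) ψ (pPrime p) =
        if p ∈ U ∪ Wp then n + 1 else n := by
      intro p
      by_cases hw : p ∈ Wp
      · have := hdis p hw
        simp [mutate, hmem, hw, hψp, this]
      · by_cases hu : p ∈ U <;> simp [mutate, hmem, hw, hu, hψp]
    refine ⟨?_, hmz, hmp⟩
    intro p q hc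
    obtain ⟨rfl, l, rfl⟩ := cover_classify hc
    rw [hmz, hmp]
    by_cases h : l ∈ U ∪ Wp <;> simp [h] <;> omega
  · intro hne hT
    obtain ⟨p, hw, hu⟩ := Set.nonempty_iff_ne_empty.mpr hne
    have := hT zeroPrime (pPrime p) (zero_covby p)
    rw [hmz] at this
    have hv : mutate (pPrime '' Wp) ψ (pPrime p) = n + 2 := by
      simp [mutate, hmem, hw, hψp, hu]; ring
    omega
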